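/- Let A, B ∈ ℝ^{n×n} be symmetric with B positive definite, and ξ, η ∈ ℝⁿ. Then sup over ν ∈ ℝⁿ with ν ≠ 0 of (ηᵀAν)(νᵀAξ)/(νᵀBν) equals (|B^{−1/2}Aξ| · |B^{−1/2}Aη| + ⟨B^{−1/2}Aξ, B^{−1/2}Aη⟩)/2, provided n ≥ 2 and the vectors B^{−1/2}Aξ and B^{−1/2}Aη are nonzero. -/

import Mathlib

open Matrix
open scoped MatrixOrder

open RealInnerProductSpace in
lemma aux_ub {E : Type*} [NormedAddCommGroup E] [InnerProductSpace ℝ E]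
    (a b w : E) (hw : w ≠ 0) :
    ⟪b, w⟫ * ⟪w, a⟫ / ‖w‖ ^ 2 ≤ (‖a‖ * ‖b‖ + ⟪a, b⟫) / 2 := by
  have hw2 : (0:ℝ) < ‖w‖ ^ 2 := by
    have := norm_pos_iff.mpr hw
    positivity
  rw [div_le_div_iff₀ hw2 two_pos]
  set v := (2 * ⟪b, w⟫) • w - (‖w‖ ^ 2) • b with hv
  have h1 : ⟪a, v⟫ ≤ ‖a‖ * ‖v‖ := real_inner_le_norm a v
  have h2sq : ‖v‖ ^ 2 = (‖w‖ ^ 2 * ‖b‖) ^ 2 := by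
    rw [hv, norm_sub_sq_real, norm_smul, norm_smul, real_inner_smul_left,
      real_inner_smul_right, real_inner_comm w b]
    simp [mul_pow, sq_abs]
    ring
  have h2 : ‖v‖ = ‖w‖ ^ 2 * ‖b‖ := by
    have := congrArg Real.sqrt h2sq
    rwa [Real.sqrt_sq (norm_nonneg v), Real.sqrt_sq (by positivity)] at this
  have h3 : ⟪a, v⟫ = 2 * ⟪b, w⟫ * ⟪a, w⟫ - ‖w‖ ^ 2 * ⟪a, b⟫ := by
    rw [hv, inner_sub_right, real_inner_smul_right, real_inner_smul_right]
  rw [h2, h3] at h1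
  rw [real_inner_comm a w]
  nlinarith [h1]

open RealInnerProductSpace in
lemma aux_mem {E : Type*} [NormedAddCommGroup E] [InnerProductSpace ℝ E]
    [FiniteDimensional ℝ E] (hd : 2 ≤ Module.finrank ℝ E)
    (a b : E) (ha : a ≠ 0) (hb : b ≠ 0) :
    ∃ w : E, w ≠ 0 ∧ ⟪b, w⟫ * ⟪w, a⟫ / ‖w‖ ^ 2 = (‖a‖ * ‖b‖ + ⟪a, b⟫) / 2 := by
  have hA : (0:ℝ) < ‖a‖ := norm_pos_iff.mpr ha
  have hB : (0:ℝ) < ‖b‖ := norm_pos_iff.mpr hb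
  by_cases h : ‖b‖ • a + ‖a‖ • b = 0
  · have hab : ⟪a, b⟫ = -(‖a‖ * ‖b‖) := by
      have h0 := congrArg (fun x => ⟪a, x⟫) h
      simp only [inner_add_right, real_inner_smul_right, inner_zero_right,
        real_inner_self_eq_norm_sq] at h0
      have : ‖b‖ * ‖a‖ ^ 2 + ‖a‖ * ⟪a, b⟫ = 0 := h0
      have ha' : ‖a‖ ≠ 0 := ne_of_gt hA
      have h2 : ‖a‖ * ⟪a, b⟫ = ‖a‖ * (-(‖a‖ * ‖b‖)) := by linear_combination this
      exact mul_left_cancel₀ ha' h2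
    obtain ⟨w, hw, hw0⟩ : ∃ w ∈ (ℝ ∙ a)ᗮ, w ≠ 0 := by
      apply Submodule.exists_mem_ne_zero_of_ne_bot
      intro hbot
      have htop : (ℝ ∙ a) = ⊤ := Submodule.orthogonal_eq_bot_iff.mp hbot
      have h1 : Module.finrank ℝ E = 1 := by
        rw [← finrank_span_singleton (K := ℝ) ha, htop, finrank_top]
      omega
    refine ⟨w, hw0, ?_⟩
    have hwa : ⟪w, a⟫ = 0 := by
      rw [real_inner_comm]
      exact hw a (Submodule.mem_span_singleton_self a)
    rw [hwa, hab]
    simp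
  · refine ⟨‖b‖ • a + ‖a‖ • b, h, ?_⟩
    set s : ℝ := ‖a‖ * ‖b‖ + ⟪a, b⟫ with hs
    have hbw : ⟪b, ‖b‖ • a + ‖a‖ • b⟫ = ‖b‖ * s := by
      rw [inner_add_right, real_inner_smul_right, real_inner_smul_right,
        real_inner_self_eq_norm_sq, real_inner_comm a b, hs]
      ring
    have hwa : ⟪‖b‖ • a + ‖a‖ • b, a⟫ = ‖a‖ * s := by
      rw [inner_add_left, real_inner_smul_left, real_inner_smul_left,
        real_inner_self_eq_norm_sq, real_inner_comm a b, hs]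
      ring
    have hnw : ‖‖b‖ • a + ‖a‖ • b‖ ^ 2 = 2 * ‖a‖ * ‖b‖ * s := by
      rw [norm_add_sq_real, real_inner_smul_left, real_inner_smul_right,
        norm_smul, norm_smul, hs]
      simp [mul_pow, abs_of_nonneg (norm_nonneg a), abs_of_nonneg (norm_nonneg b)]
      ring
    have hspos : 0 < s := by
      have hnpos : (0:ℝ) < ‖‖b‖ • a + ‖a‖ • b‖ ^ 2 := by
        have := norm_pos_iff.mpr h
        positivity
      nlinarith [hnpos, hnw, mul_pos hA hB]
    rw [hbw, hwa, hnw]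
    field_simp

open RealInnerProductSpace in
lemma aux_sup {n : ℕ} (hn : 2 ≤ n) (a b : Fin n → ℝ) (ha : a ≠ 0) (hb : b ≠ 0) :
    sSup {t : ℝ | ∃ w : Fin n → ℝ, w ≠ 0 ∧ t = (b ⬝ᵥ w) * (w ⬝ᵥ a) / (w ⬝ᵥ w)}
      = (Real.sqrt (a ⬝ᵥ a) * Real.sqrt (b ⬝ᵥ b) + a ⬝ᵥ b) / 2 := by
  set e : (Fin n → ℝ) ≃ EuclideanSpace ℝ (Fin n) := (WithLp.equiv 2 (Fin n → ℝ)).symm with he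
  have hdot : ∀ x y : Fin n → ℝ, x ⬝ᵥ y = ⟪e x, e y⟫ := by
    intro x y
    simp [he, dotProduct, PiLp.inner_apply, RCLike.inner_apply]
    exact Finset.sum_congr rfl (fun i _ => mul_comm _ _)
  have hzero : ∀ x : Fin n → ℝ, e x = 0 ↔ x = 0 := by
    intro x
    constructor
    · intro hx
      have : e x = e 0 := by simpa [he] using hx
      exact e.injective this
    · intro hx; simp [hx, he]
  have hnorm : ∀ x : Fin n → ℝ, Real.sqrt (x ⬝ᵥ x) = ‖e x‖ := by
    intro x
    rw [hdot, real_inner_self_eq_norm_sq, Real.sqrt_sq (norm_nonneg _)]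
  have hM : (Real.sqrt (a ⬝ᵥ a) * Real.sqrt (b ⬝ᵥ b) + a ⬝ᵥ b) / 2
      = (‖e a‖ * ‖e b‖ + ⟪e a, e b⟫) / 2 := by
    rw [hnorm, hnorm, hdot]
  rw [hM]
  have ha' : e a ≠ 0 := fun hx => ha ((hzero a).mp hx)
  have hb' : e b ≠ 0 := fun hx => hb ((hzero b).mp hx)
  apply IsGreatest.csSup_eq
  constructor
  · obtain ⟨w, hw0, hw⟩ := aux_mem (E := EuclideanSpace ℝ (Fin n))
      (by rw [finrank_euclideanSpace_fin]; exact hn) (e a) (e b) ha' hb'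
    refine ⟨e.symm w, ?_, ?_⟩
    · intro hx
      apply hw0
      have h0 : e (e.symm w) = 0 := (hzero _).mpr hx
      rwa [e.apply_symm_apply] at h0
    · rw [hdot, hdot, hdot]
      simp only [Equiv.apply_symm_apply]
      rw [← hw, real_inner_self_eq_norm_sq]
  · rintro t ⟨w, hw0, rfl⟩
    rw [hdot, hdot, hdot, real_inner_self_eq_norm_sq]
    exact aux_ub (e a) (e b) (e w) (fun hx => hw0 ((hzero w).mp hx))

theorem stmt_12 (n : ℕ) (hn : 2 ≤ n) (A B : Matrix (Fin n) (Fin n) ℝ)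
    (hA : A.IsSymm) (hB : B.PosDef)
    (ξ η : Fin n → ℝ)
    (S : Matrix (Fin n) (Fin n) ℝ) (hS : S = CFC.sqrt B)
    (ξ' η' : Fin n → ℝ)
    (hξ' : ξ' = S⁻¹ *ᵥ (A *ᵥ ξ))
    (hη' : η' = S⁻¹ *ᵥ (A *ᵥ η))
    (hξ'0 : ξ' ≠ 0) (hη'0 : η' ≠ 0) :
    sSup {t : ℝ | ∃ ν : Fin n → ℝ, ν ≠ 0 ∧
        t = (η ⬝ᵥ (A *ᵥ ν)) * (ν ⬝ᵥ (A *ᵥ ξ)) / (ν ⬝ᵥ (B *ᵥ ν))}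
      = (Real.sqrt (ξ' ⬝ᵥ ξ') * Real.sqrt (η' ⬝ᵥ η') + ξ' ⬝ᵥ η') / 2 := by
  -- basic facts about S
  have hSS : S * S = B := by rw [hS]; exact CFC.sqrt_mul_sqrt_self B hB.posSemidef.nonneg
  have hSsym : Sᵀ = S := by
    rw [hS, ← Matrix.conjTranspose_eq_transpose_of_trivial]
    exact IsSelfAdjoint.of_nonneg (CFC.sqrt_nonneg B)
  have hdet : IsUnit S.det := by
    have hBdet : B.det ≠ 0 := ne_of_gt hB.det_pos
    have : S.det * S.det ≠ 0 := by rw [← Matrix.det_mul, hSS]; exact hBdet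
    exact isUnit_iff_ne_zero.mpr (fun h => this (by rw [h, zero_mul]))
  have hSinv : ∀ v : Fin n → ℝ, S *ᵥ (S⁻¹ *ᵥ v) = v := by
    intro v
    rw [Matrix.mulVec_mulVec, Matrix.mul_nonsing_inv _ hdet, Matrix.one_mulVec]
  have hinvS : ∀ v : Fin n → ℝ, S⁻¹ *ᵥ (S *ᵥ v) = v := by
    intro v
    rw [Matrix.mulVec_mulVec, Matrix.nonsing_inv_mul _ hdet, Matrix.one_mulVec]
  -- symmetric matrix dot product move
  have hmove : ∀ (M : Matrix (Fin n) (Fin n) ℝ), Mᵀ = M →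
      ∀ x y : Fin n → ℝ, x ⬝ᵥ (M *ᵥ y) = (M *ᵥ x) ⬝ᵥ y := by
    intro M hM x y
    rw [Matrix.dotProduct_mulVec, ← Matrix.mulVec_transpose, hM]
  have hAξ : A *ᵥ ξ = S *ᵥ ξ' := by rw [hξ', hSinv]
  have hAη : A *ᵥ η = S *ᵥ η' := by rw [hη', hSinv]
  -- rewrite the set
  have hset : {t : ℝ | ∃ ν : Fin n → ℝ, ν ≠ 0 ∧
        t = (η ⬝ᵥ (A *ᵥ ν)) * (ν ⬝ᵥ (A *ᵥ ξ)) / (ν ⬝ᵥ (B *ᵥ ν))}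
      = {t : ℝ | ∃ w : Fin n → ℝ, w ≠ 0 ∧
        t = (η' ⬝ᵥ w) * (w ⬝ᵥ ξ') / (w ⬝ᵥ w)} := by
    have key : ∀ ν : Fin n → ℝ,
        (η ⬝ᵥ (A *ᵥ ν)) * (ν ⬝ᵥ (A *ᵥ ξ)) / (ν ⬝ᵥ (B *ᵥ ν))
          = (η' ⬝ᵥ (S *ᵥ ν)) * ((S *ᵥ ν) ⬝ᵥ ξ') / ((S *ᵥ ν) ⬝ᵥ (S *ᵥ ν)) := by
      intro ν
      have e1 : η ⬝ᵥ (A *ᵥ ν) = η' ⬝ᵥ (S *ᵥ ν) := by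
        rw [hmove A hA.eq η ν, hAη, ← hmove S hSsym]
      have e2 : ν ⬝ᵥ (A *ᵥ ξ) = (S *ᵥ ν) ⬝ᵥ ξ' := by
        rw [hAξ, hmove S hSsym]
      have e3 : ν ⬝ᵥ (B *ᵥ ν) = (S *ᵥ ν) ⬝ᵥ (S *ᵥ ν) := by
        rw [← hSS, ← Matrix.mulVec_mulVec, hmove S hSsym]
      rw [e1, e2, e3]
    ext t
    simp only [Set.mem_setOf_eq]
    constructor
    · rintro ⟨ν, hν, rfl⟩
      refine ⟨S *ᵥ ν, ?_, key ν⟩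
      intro h0
      apply hν
      rw [← hinvS ν, h0, Matrix.mulVec_zero]
    · rintro ⟨w, hw, rfl⟩
      refine ⟨S⁻¹ *ᵥ w, ?_, ?_⟩
      · intro h0
        apply hw
        rw [← hSinv w, h0, Matrix.mulVec_zero]
      · rw [key, hSinv]
  rw [hset]
  exact aux_sup hn ξ' η' hξ'0 hη'0
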